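/- For the minimal open quantum random walk encoding a continuous-time Markov chain with rate matrix Q, a density matrix ρ on ℂⁿ is an invariant state of the Lindbladian if and only if (a) ρ is diagonal (assuming q_{jj} ≠ 0 for all j) and (b) its diagonal (π_i)_i satisfies Σ_i q_{ij} π_i = 0 for all j, i.e., the diagonal is an invariant measure of the Markov chain. -/

import Mathlib

open Matrix
open scoped ComplexOrder

private lemma oqrw_entry1 {n : ℕ} (ρ : Matrix (Fin n) (Fin n) ℂ) (i j a b : Fin n) :
  ((Matrix.single j i (1:ℂ) * ρ * Matrix.single i j (1:ℂ) : Matrix (Fin n) (Fin n) ℂ)) a b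
    = if j = a then (if j = b then ρ i i else 0) else 0 := by
  simp only [Matrix.mul_apply, Matrix.single, Matrix.of_apply]
  by_cases h1 : j = a <;> by_cases h2 : j = b <;>
    simp [h1, h2, Finset.sum_ite_eq, Finset.sum_ite_eq', ite_and, Matrix.mul_apply]

private lemma oqrw_entry2 {n : ℕ} (ρ : Matrix (Fin n) (Fin n) ℂ) (i a b : Fin n) :
  ((Matrix.single i i (1:ℂ) * ρ + ρ * Matrix.single i i (1:ℂ) : Matrix (Fin n) (Fin n) ℂ)) a b
    = (if i = a then ρ i b else 0) + (if i = b then ρ a i else 0) := by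
  simp [Matrix.mul_apply, Matrix.single, ite_and]

private lemma oqrw_keyentry {n : ℕ}
    (q : Matrix (Fin n) (Fin n) ℝ)
    (hrate_sum : ∀ i : Fin n, ∑ j, q i j = 0)
    (Lind : Matrix (Fin n) (Fin n) ℂ → Matrix (Fin n) (Fin n) ℂ)
    (hLind : ∀ ρ, Lind ρ =
      (∑ i, ∑ j ∈ Finset.univ.filter (· ≠ i), (q i j : ℂ) •
        (Matrix.single j i (1 : ℂ) * ρ * Matrix.single i j (1 : ℂ)))
      - (1 / 2 : ℂ) • ∑ i, ((∑ j ∈ Finset.univ.filter (· ≠ i), q i j : ℝ) : ℂ) •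
        (Matrix.single i i (1 : ℂ) * ρ + ρ * Matrix.single i i (1 : ℂ)))
    (ρ : Matrix (Fin n) (Fin n) ℂ) (a b : Fin n) :
    Lind ρ a b = if a = b then ∑ i, (q i a : ℂ) * ρ i i
      else (1/2) * ((q a a : ℂ) + (q b b : ℂ)) * ρ a b := by
  have hq : ∀ i : Fin n, ((∑ j ∈ Finset.univ.filter (· ≠ i), q i j : ℝ) : ℂ) = -(q i i : ℂ) := by
    intro i
    have h1 : ∑ j ∈ Finset.univ.filter (· ≠ i), q i j = -(q i i) := by
      have h := hrate_sum i
      rw [← Finset.add_sum_erase Finset.univ (q i) (Finset.mem_univ i)] at h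
      rw [Finset.filter_ne']
      linarith
    rw [h1]; push_cast; ring
  rw [hLind]
  simp only [Matrix.sub_apply, Matrix.sum_apply, Matrix.smul_apply, smul_eq_mul,
    oqrw_entry1, oqrw_entry2, hq]
  by_cases hab : a = b
  · subst hab
    simp only [if_pos rfl, mul_ite, mul_zero, ite_self, mul_add, if_true]
    simp only [Finset.sum_ite_eq', Finset.mem_filter, Finset.mem_univ, true_and, Finset.sum_add_distrib]
    have hrw : ∀ x : Fin n, (if a ≠ x then (if True then (q x a : ℂ) * ρ x x else 0) else 0)
        = (q x a : ℂ) * ρ x x - (if a = x then (q x a : ℂ) * ρ x x else 0) := by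
      intro x; by_cases h : a = x <;> simp [h]
    rw [Finset.sum_congr rfl (fun x _ => hrw x), Finset.sum_sub_distrib]
    simp only [Finset.sum_ite_eq, Finset.mem_univ, if_true]
    ring
  · simp only [if_neg hab]
    have hrw : ∀ (x x1 : Fin n), (if x1 = a then if x1 = b then (q x x1:ℂ) * ρ x x else 0 else 0) = 0 := by
      intro x x1; by_cases h : x1 = a <;> simp [h, hab]
    simp only [mul_ite, mul_zero, hrw, Finset.sum_const_zero]
    have h2 : ∀ x : Fin n, -(q x x:ℂ) * ((if x = a then ρ x b else 0) + if x = b then ρ a x else 0)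
        = (if x = a then -((q x x:ℂ) * ρ x b) else 0) + (if x = b then -((q x x:ℂ) * ρ a x) else 0) := by
      intro x; by_cases h1 : x = a <;> by_cases h3 : x = b <;>
        simp [h1, h3, hab, Ne.symm hab]
    rw [Finset.sum_congr rfl (fun x _ => h2 x), Finset.sum_add_distrib]
    simp only [Finset.sum_ite_eq', Finset.mem_univ, if_true]
    ring

/-- For the minimal open quantum random walk encoding a continuous-time
Markov chain with rate matrix `Q`, a density matrix is invariant iff it is diagonal
and its diagonal is an invariant measure of the chain. -/
theorem minimal_OQRW_invariant_iff {n : ℕ}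
    (q : Matrix (Fin n) (Fin n) ℝ)
    (hrate_nonneg : ∀ i j : Fin n, i ≠ j → 0 ≤ q i j)
    (hrate_sum : ∀ i : Fin n, ∑ j, q i j = 0)
    (hdiag_ne : ∀ j : Fin n, q j j ≠ 0)
    (Lind : Matrix (Fin n) (Fin n) ℂ → Matrix (Fin n) (Fin n) ℂ)
    (hLind : ∀ ρ, Lind ρ =
      (∑ i, ∑ j ∈ Finset.univ.filter (· ≠ i), (q i j : ℂ) •
        (Matrix.single j i (1 : ℂ) * ρ * Matrix.single i j (1 : ℂ)))
      - (1 / 2 : ℂ) • ∑ i, ((∑ j ∈ Finset.univ.filter (· ≠ i), q i j : ℝ) : ℂ) •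
        (Matrix.single i i (1 : ℂ) * ρ + ρ * Matrix.single i i (1 : ℂ)))
    (ρ : Matrix (Fin n) (Fin n) ℂ) (hρ : ρ.PosSemidef ∧ ρ.trace = 1) :
    Lind ρ = 0 ↔
      (∀ i j : Fin n, i ≠ j → ρ i j = 0) ∧
      (∀ j : Fin n, ∑ i, (q i j : ℂ) * ρ i i = 0) := by
  have hneg : ∀ i : Fin n, q i i < 0 := by
    intro i
    have h := hrate_sum i
    rw [← Finset.add_sum_erase Finset.univ (q i) (Finset.mem_univ i)] at h
    have hge : 0 ≤ ∑ j ∈ Finset.univ.erase i, q i j :=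
      Finset.sum_nonneg fun j hj => hrate_nonneg i j (Ne.symm (Finset.ne_of_mem_erase hj))
    rcases lt_or_eq_of_le (by linarith : q i i ≤ 0) with h' | h'
    · exact h'
    · exact absurd h' (hdiag_ne i)
  constructor
  · intro h
    have he : ∀ a b : Fin n, (if a = b then ∑ i, (q i a : ℂ) * ρ i i
        else (1/2) * ((q a a : ℂ) + (q b b : ℂ)) * ρ a b) = 0 := by
      intro a b
      rw [← oqrw_keyentry q hrate_sum Lind hLind ρ a b, h, Matrix.zero_apply]
    constructor
    · intro i j hij
      have := he i j
      rw [if_neg hij] at this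
      have hcoef : ((q i i : ℂ) + (q j j : ℂ)) ≠ 0 := by
        have : q i i + q j j < 0 := by have := hneg i; have := hneg j; linarith
        intro hc
        have : ((q i i + q j j : ℝ) : ℂ) = 0 := by push_cast; exact hc
        rw [Complex.ofReal_eq_zero] at this
        linarith
      have h12 : (1/2 : ℂ) ≠ 0 := by norm_num
      rcases mul_eq_zero.mp this with h' | h'
      · rcases mul_eq_zero.mp h' with h'' | h''
        · exact absurd h'' h12
        · exact absurd h'' hcoef
      · exact h'
    · intro j
      have := he j j
      rwa [if_pos rfl] at this
  · rintro ⟨h1, h2⟩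
    ext a b
    rw [oqrw_keyentry q hrate_sum Lind hLind ρ a b, Matrix.zero_apply]
    by_cases hab : a = b
    · rw [if_pos hab]; subst hab; exact h2 a
    · rw [if_neg hab, h1 a b hab, mul_zero]
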